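/- In the setting of the previous ODE lemma, if additionally c = lim_{t→−∞} e^{−λt} f(t) = 0 and |r(t)| ≤ C e^{(Re λ + 2)t} for t ≤ 0, then |f(t)| ≤ C₁ e^{(Re λ + 2)t} for all t ≤ 0; iterating (assuming at each stage the corresponding bound on r improves by e^{2t}) yields |f(t)| ≤ C_N e^{Nt} for all N and all t ≤ 0. -/

import Mathlib

open Filter in
lemma boot_aux (f r : ℝ → ℂ) (l : ℂ) (hr : Continuous r)
    (hode : ∀ t : ℝ, HasDerivAt f (l * f t + r t) t)
    (hc0 : Filter.Tendsto (fun t : ℝ => Complex.exp (-(l * t)) * f t)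
      Filter.atBot (nhds 0))
    (a C : ℝ) (ha : 0 < a)
    (hrb : ∀ t ≤ (0 : ℝ), ‖r t‖ ≤ C * Real.exp ((l.re + a) * t)) :
    ∀ t ≤ (0 : ℝ), ‖f t‖ ≤ (C / a) * Real.exp ((l.re + a) * t) := by
  have hC : 0 ≤ C := by
    have := hrb 0 le_rfl
    simpa using (norm_nonneg (r 0)).trans this
  set g : ℝ → ℂ := fun t => Complex.exp (-(l * t)) * f t with hgdef
  have hexp : ∀ t : ℝ, HasDerivAt (fun t : ℝ => Complex.exp (-(l * t))) (-l * Complex.exp (-(l * t))) t := by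
    intro t
    have h1 : HasDerivAt (fun t : ℝ => -(l * t)) (-l) t := by
      exact (((Complex.ofRealCLM.hasDerivAt (x := t)).const_mul l).neg).congr_deriv (by simp)
    simpa [mul_comm] using h1.cexp
  have hg : ∀ t : ℝ, HasDerivAt g (Complex.exp (-(l * t)) * r t) t := by
    intro t
    have := (hexp t).mul (hode t)
    refine this.congr_deriv ?_
    ring
  have hnorm : ∀ t ≤ (0:ℝ), ‖Complex.exp (-(l * t)) * r t‖ ≤ C * Real.exp (a * t) := by
    intro t ht
    rw [norm_mul, Complex.norm_exp]
    have hre : (-(l * (t:ℂ))).re = -(l.re * t) := by simp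
    rw [hre]
    calc Real.exp (-(l.re * t)) * ‖r t‖
        ≤ Real.exp (-(l.re * t)) * (C * Real.exp ((l.re + a) * t)) := by
          exact mul_le_mul_of_nonneg_left (hrb t ht) (Real.exp_pos _).le
      _ = C * (Real.exp (-(l.re * t)) * Real.exp ((l.re + a) * t)) := by ring
      _ = C * Real.exp (a * t) := by rw [← Real.exp_add]; ring_nf
  have hcont : Continuous (fun s : ℝ => Complex.exp (-(l * s)) * r s) := by
    exact (Complex.continuous_exp.comp (by continuity)).mul hr
  -- key: for T ≤ t ≤ 0 : ‖g t‖ ≤ ‖g T‖ + C/a * exp(a t)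
  have key : ∀ t ≤ (0:ℝ), ∀ T ≤ t, ‖g t‖ ≤ ‖g T‖ + C / a * Real.exp (a * t) := by
    intro t ht T hT
    have hint : g t - g T = ∫ s in T..t, Complex.exp (-(l * s)) * r s := by
      rw [intervalIntegral.integral_eq_sub_of_hasDerivAt (fun s _ => hg s)
        (hcont.intervalIntegrable _ _)]
    have hI : ‖∫ s in T..t, Complex.exp (-(l * s)) * r s‖ ≤ ∫ s in T..t, C * Real.exp (a * s) := by
      have h1 := intervalIntegral.norm_integral_le_abs_of_norm_le
        (μ := MeasureTheory.volume) (a := T) (b := t)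
        (f := fun s => Complex.exp (-(l * s)) * r s) (g := fun s => C * Real.exp (a * s))
        (by
          rw [Set.uIoc_of_le hT]
          filter_upwards [MeasureTheory.ae_restrict_mem measurableSet_Ioc] with s hs
          exact hnorm s (hs.2.trans ht))
        ((continuous_const.mul (Real.continuous_exp.comp (by continuity))).intervalIntegrable _ _)
      refine h1.trans (le_of_eq (abs_of_nonneg ?_))
      exact intervalIntegral.integral_nonneg hT
        (fun s _ => mul_nonneg hC (Real.exp_pos _).le)
    have hIval : (∫ s in T..t, C * Real.exp (a * s)) = C / a * Real.exp (a * t) - C / a * Real.exp (a * T) := by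
      have : ∀ s : ℝ, HasDerivAt (fun s => C / a * Real.exp (a * s)) (C * Real.exp (a * s)) s := by
        intro s
        have := ((Real.hasDerivAt_exp (a * s)).comp s (by simpa using (hasDerivAt_id s).const_mul a)).const_mul (C / a)
        refine this.congr_deriv ?_
        field_simp
      rw [intervalIntegral.integral_eq_sub_of_hasDerivAt (fun s _ => this s)
        ((continuous_const.mul (Real.continuous_exp.comp (by continuity))).intervalIntegrable _ _)]
    have h1 : ‖g t‖ - ‖g T‖ ≤ ‖g t - g T‖ := norm_sub_norm_le _ _
    have h2 : ‖g t - g T‖ ≤ C / a * Real.exp (a * t) - C / a * Real.exp (a * T) := by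
      rw [hint]; exact hI.trans_eq hIval
    have h3 : C / a * Real.exp (a * T) ≥ 0 :=
      mul_nonneg (div_nonneg hC ha.le) (Real.exp_pos _).le
    linarith
  intro t ht
  have hlim : Tendsto (fun T : ℝ => ‖g T‖ + C / a * Real.exp (a * t)) atBot
      (nhds (0 + C / a * Real.exp (a * t))) := by
    simpa using hc0.norm.add (tendsto_const_nhds (x := C / a * Real.exp (a * t)))
  have : ‖g t‖ ≤ 0 + C / a * Real.exp (a * t) := by
    refine ge_of_tendsto hlim ?_
    filter_upwards [eventually_le_atBot t] with T hT
    exact key t ht T hT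
  -- convert bound on g to bound on f
  have hfg : f t = Complex.exp (l * t) * g t := by
    simp only [hgdef]
    rw [← mul_assoc, ← Complex.exp_add]
    simp
  rw [hfg, norm_mul, Complex.norm_exp]
  have hre : ((l * (t:ℂ))).re = l.re * t := by simp
  rw [hre]
  calc Real.exp (l.re * t) * ‖g t‖ ≤ Real.exp (l.re * t) * (C / a * Real.exp (a * t)) := by
        apply mul_le_mul_of_nonneg_left (by linarith) (Real.exp_pos _).le
    _ = C / a * (Real.exp (l.re * t) * Real.exp (a * t)) := by ring
    _ = C / a * Real.exp ((l.re + a) * t) := by rw [← Real.exp_add]; ring_nf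

/-- Iterated bootstrapping: if `f' = λf + r`, `f` has some a priori exponential
bound on `t ≤ 0`, the renormalized limit `lim_{t→−∞} e^{−λt} f(t)` is `0`, and
`|r(t)| ≤ C e^{(Re λ+2)t}` for `t ≤ 0`, then `|f(t)| ≤ C₁ e^{(Re λ+2)t}` for
`t ≤ 0`; and if the bound on `r` improves by `e^{2t}` at each stage, then for every
`N` one has `|f(t)| ≤ C_N e^{Nt}` for all `t ≤ 0`. -/
theorem stmt17 (f r : ℝ → ℂ) (l : ℂ)
    (hr : Continuous r)
    (hode : ∀ t : ℝ, HasDerivAt f (l * f t + r t) t)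
    (hf : ∃ Λ C : ℝ, ∀ t ≤ (0 : ℝ), ‖f t‖ ≤ C * Real.exp (Λ * t))
    (hc0 : Filter.Tendsto (fun t : ℝ => Complex.exp (-(l * t)) * f t)
      Filter.atBot (nhds 0))
    (hrb : ∃ C : ℝ, ∀ t ≤ (0 : ℝ), ‖r t‖ ≤ C * Real.exp ((l.re + 2) * t)) :
    (∃ C₁ : ℝ, ∀ t ≤ (0 : ℝ), ‖f t‖ ≤ C₁ * Real.exp ((l.re + 2) * t)) ∧
    ((∀ N : ℕ, ∃ C : ℝ, ∀ t ≤ (0 : ℝ),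
        ‖r t‖ ≤ C * Real.exp ((l.re + 2 * (N + 1)) * t)) →
      ∀ N : ℕ, ∃ C : ℝ, ∀ t ≤ (0 : ℝ), ‖f t‖ ≤ C * Real.exp ((N : ℝ) * t)) := by
  constructor
  · obtain ⟨C, hC⟩ := hrb
    exact ⟨C / 2, boot_aux f r l hr hode hc0 2 C two_pos hC⟩
  · intro H N
    obtain ⟨M, hM⟩ := exists_nat_ge (((N : ℝ) - l.re) / 2)
    have hMN : (N : ℝ) ≤ l.re + 2 * ((M : ℝ) + 1) := by linarith
    obtain ⟨C, hC⟩ := H M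
    have ha : (0:ℝ) < 2 * ((M : ℝ) + 1) := by positivity
    have hCnn : 0 ≤ C := by
      have := hC 0 le_rfl
      simpa using (norm_nonneg (r 0)).trans this
    have hb := boot_aux f r l hr hode hc0 (2 * ((M : ℝ) + 1)) C ha hC
    refine ⟨C / (2 * ((M : ℝ) + 1)), fun t ht => ?_⟩
    refine (hb t ht).trans ?_
    have hexp : Real.exp ((l.re + 2 * ((M : ℝ) + 1)) * t) ≤ Real.exp ((N : ℝ) * t) :=
      Real.exp_le_exp.2 (mul_le_mul_of_nonpos_right hMN ht)
    exact mul_le_mul_of_nonneg_left hexp (div_nonneg hCnn ha.le)
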